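/- (Eneström–Kakeya) Let p(λ) = a₀ + a₁λ + ⋯ + aₙλⁿ be a polynomial with all aⱼ > 0. Then every complex zero z of p satisfies ρ_m ≤ |z| ≤ ρ_M, where ρ_m = min{a₀/a₁, a₁/a₂, …, a_{n-1}/aₙ} and ρ_M = max{a₀/a₁, …, a_{n-1}/aₙ}. -/

import Mathlib

private lemma ek_identity (b : ℕ → ℂ) (z : ℂ) (n : ℕ) :
    (z - 1) * ∑ j ∈ Finset.range (n+1), b j * z ^ j
      = b n * z ^ (n+1) - b 0
        - ∑ j ∈ Finset.range n, (b (j+1) - b j) * z ^ (j+1) := by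
  induction n with
  | zero => simp; ring
  | succ n ih =>
      rw [Finset.sum_range_succ (f := fun j => b j * z ^ j),
        Finset.sum_range_succ (f := fun j => (b (j+1) - b j) * z ^ (j+1)),
        mul_add, ih]
      ring

private lemma ek_monotone (b : ℕ → ℝ) (n : ℕ) (hb : ∀ j ≤ n, 0 < b j)
    (hmono : ∀ j < n, b j ≤ b (j+1)) (z : ℂ)
    (hz : ∑ j ∈ Finset.range (n+1), (b j : ℂ) * z ^ j = 0) :
    ‖z‖ ≤ 1 := by
  by_contra h
  push_neg at h
  have hz1 : (1:ℝ) < ‖z‖ := h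
  have hid := ek_identity (fun j => (b j : ℂ)) z n
  rw [hz, mul_zero] at hid
  have hkey : (b n : ℂ) * z ^ (n+1)
      = (b 0 : ℂ) + ∑ j ∈ Finset.range n, ((b (j+1) : ℂ) - b j) * z ^ (j+1) := by
    linear_combination -hid
  have habs : b n * ‖z‖ ^ (n+1)
      ≤ b 0 + ∑ j ∈ Finset.range n, (b (j+1) - b j) * ‖z‖ ^ (j+1) := by
    calc b n * ‖z‖ ^ (n+1)
        = ‖(b n : ℂ) * z ^ (n+1)‖ := by
          rw [norm_mul, norm_pow, Complex.norm_real, Real.norm_eq_abs,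
            abs_of_pos (hb n le_rfl)]
      _ = ‖(b 0 : ℂ) + ∑ j ∈ Finset.range n, ((b (j+1) : ℂ) - b j) * z ^ (j+1)‖ := by
          rw [hkey]
      _ ≤ ‖(b 0 : ℂ)‖
          + ∑ j ∈ Finset.range n, ‖((b (j+1) : ℂ) - b j) * z ^ (j+1)‖ := by
          refine (norm_add_le _ _).trans ?_
          gcongr
          exact norm_sum_le _ _
      _ ≤ b 0 + ∑ j ∈ Finset.range n, (b (j+1) - b j) * ‖z‖ ^ (j+1) := by
          gcongr with j hj
          · rw [Complex.norm_real, Real.norm_eq_abs, abs_of_pos (hb 0 (Nat.zero_le n))]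
          · rw [norm_mul, norm_pow]
            have hjn := Finset.mem_range.mp hj
            rw [← Complex.ofReal_sub, Complex.norm_real, Real.norm_eq_abs,
              abs_of_nonneg (sub_nonneg.mpr (hmono j hjn))]
  have hbound : b 0 + ∑ j ∈ Finset.range n, (b (j+1) - b j) * ‖z‖ ^ (j+1)
      ≤ b n * ‖z‖ ^ n := by
    have h1 : b 0 ≤ b 0 * ‖z‖ ^ n := by
      nlinarith [one_le_pow₀ hz1.le (n:=n), hb 0 (Nat.zero_le n)]
    have h2 : ∀ j ∈ Finset.range n, (b (j+1) - b j) * ‖z‖ ^ (j+1)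
        ≤ (b (j+1) - b j) * ‖z‖ ^ n := by
      intro j hj
      have hjn := Finset.mem_range.mp hj
      have : ‖z‖ ^ (j+1) ≤ ‖z‖ ^ n :=
        pow_le_pow_right₀ hz1.le (by omega)
      nlinarith [hmono j hjn]
    calc b 0 + ∑ j ∈ Finset.range n, (b (j+1) - b j) * ‖z‖ ^ (j+1)
        ≤ b 0 * ‖z‖ ^ n
          + ∑ j ∈ Finset.range n, (b (j+1) - b j) * ‖z‖ ^ n := by
          exact add_le_add h1 (Finset.sum_le_sum h2)
      _ = b n * ‖z‖ ^ n := by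
          rw [← Finset.sum_mul, Finset.sum_range_sub (fun j => b j)]
          ring
  have hfin : b n * ‖z‖ ^ (n+1) ≤ b n * ‖z‖ ^ n :=
    habs.trans hbound
  have hbn := hb n le_rfl
  have : ‖z‖ ^ (n+1) ≤ ‖z‖ ^ n := le_of_mul_le_mul_left (by linarith [hfin]) hbn
  have hgt : ‖z‖ ^ n < ‖z‖ ^ (n+1) := by
    have := pow_lt_pow_right₀ hz1 (Nat.lt_succ_self n)
    exact this
  linarith

private lemma ek_upper (a : ℕ → ℝ) (n : ℕ) (ha : ∀ j ≤ n, 0 < a j)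
    (R : ℝ) (hR : 0 < R) (hrat : ∀ j < n, a j ≤ a (j+1) * R) (z : ℂ)
    (hz : ∑ j ∈ Finset.range (n+1), (a j : ℂ) * z ^ j = 0) :
    ‖z‖ ≤ R := by
  set b : ℕ → ℝ := fun j => a j * R ^ j with hb
  have hbpos : ∀ j ≤ n, 0 < b j := fun j hj => mul_pos (ha j hj) (pow_pos hR j)
  have hbmono : ∀ j < n, b j ≤ b (j+1) := by
    intro j hj
    simp only [hb]
    calc a j * R ^ j ≤ (a (j+1) * R) * R ^ j := by
          have := hrat j hj
          nlinarith [pow_pos hR j]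
      _ = a (j+1) * R ^ (j+1) := by ring
  have hsum : ∑ j ∈ Finset.range (n+1), (b j : ℂ) * (z / R) ^ j = 0 := by
    rw [← hz]
    refine Finset.sum_congr rfl fun j _ => ?_
    have hRne : (R:ℂ) ≠ 0 := by exact_mod_cast hR.ne'
    simp only [hb]
    push_cast
    rw [div_pow]
    field_simp
  have := ek_monotone b n hbpos hbmono (z / R) hsum
  rw [norm_div, Complex.norm_real, Real.norm_eq_abs, abs_of_pos hR, div_le_one hR] at this
  exact this

theorem stmt_9 (n : ℕ) (hn : 1 ≤ n) (a : ℕ → ℝ) (ha : ∀ j ≤ n, 0 < a j)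
    (z : ℂ) (hz : ∑ j ∈ Finset.range (n+1), (a j : ℂ) * z ^ j = 0) :
    (((Finset.range n).image (fun j => a j / a (j+1))).min'
        (Finset.image_nonempty.mpr (Finset.nonempty_range_iff.mpr (by omega))) ≤ ‖z‖)
    ∧ (‖z‖ ≤ ((Finset.range n).image (fun j => a j / a (j+1))).max'
        (Finset.image_nonempty.mpr (Finset.nonempty_range_iff.mpr (by omega)))) := by
  have hne : ((Finset.range n).image (fun j => a j / a (j+1))).Nonempty :=
    Finset.image_nonempty.mpr (Finset.nonempty_range_iff.mpr (by omega))
  set s := (Finset.range n).image (fun j => a j / a (j+1)) with hs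
  set m := s.min' hne with hm
  set M := s.max' hne with hM
  have hmem : ∀ x ∈ s, 0 < x := by
    intro x hx
    rw [hs, Finset.mem_image] at hx
    obtain ⟨j, hj, rfl⟩ := hx
    have hjn := Finset.mem_range.mp hj
    exact div_pos (ha j (by omega)) (ha (j+1) (by omega))
  have hmpos : 0 < m := hmem m (s.min'_mem hne)
  have hMpos : 0 < M := hmem M (s.max'_mem hne)
  constructor
  · -- lower bound
    have hz0 : z ≠ 0 := by
      rintro rfl
      rw [Finset.sum_eq_single 0 (fun j _ hj => by
        simp [zero_pow hj]) (by simp)] at hz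
      simp at hz
      exact (ha 0 (by omega)).ne' hz
    set c : ℕ → ℝ := fun j => a (n - j) with hc
    have hcpos : ∀ j ≤ n, 0 < c j := fun j hj => ha (n - j) (by omega)
    have hcrat : ∀ j < n, c j ≤ c (j+1) * (1/m) := by
      intro j hj
      simp only [hc]
      have hk : n - (j+1) + 1 = n - j := by omega
      have hkn : n - (j+1) < n := by omega
      have hmle : m ≤ a (n - (j+1)) / a (n - (j+1) + 1) := by
        apply Finset.min'_le
        rw [hs, Finset.mem_image]
        exact ⟨n - (j+1), Finset.mem_range.mpr hkn, rfl⟩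
      rw [hk] at hmle
      have hpos1 : 0 < a (n - j) := ha _ (by omega)
      rw [le_div_iff₀ hpos1] at hmle
      rw [mul_one_div, le_div_iff₀ hmpos]
      linarith
    have habs : 0 < ‖z‖ := norm_pos_iff.mpr hz0
    have hwsum : ∑ j ∈ Finset.range (n+1), (c j : ℂ) * z⁻¹ ^ j = 0 := by
      have key : z ^ n * ∑ j ∈ Finset.range (n+1), (c j : ℂ) * z⁻¹ ^ j
          = ∑ j ∈ Finset.range (n+1), (a j : ℂ) * z ^ j := by
        rw [Finset.mul_sum, ← Finset.sum_range_reflect (fun j => (a j : ℂ) * z ^ j) (n+1)]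
        refine Finset.sum_congr rfl fun j hj => ?_
        have hjn : j ≤ n := by
          have := Finset.mem_range.mp hj; omega
        have hidx : n + 1 - 1 - j = n - j := by omega
        rw [hidx]
        simp only [hc]
        calc z ^ n * ((a (n-j) : ℂ) * z⁻¹ ^ j)
            = (a (n-j) : ℂ) * (z ^ n * (z ^ j)⁻¹) := by rw [inv_pow]; ring
          _ = (a (n-j) : ℂ) * z ^ (n - j) := by rw [← pow_sub₀ z hz0 hjn]
      have := key.trans hz
      exact (mul_eq_zero.mp this).resolve_left (pow_ne_zero n hz0)
    have hle := ek_upper c n hcpos (1/m) (by positivity) hcrat z⁻¹ hwsum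
    rw [norm_inv, one_div] at hle
    exact (inv_le_inv₀ habs hmpos).mp hle
  · -- upper bound
    apply ek_upper a n ha M hMpos _ z hz
    intro j hj
    have hle : a j / a (j+1) ≤ M := by
      apply Finset.le_max'
      rw [hs, Finset.mem_image]
      exact ⟨j, Finset.mem_range.mpr hj, rfl⟩
    have hpos := ha (j+1) (by omega)
    rw [div_le_iff₀ hpos] at hle
    linarith
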